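/- Every quasi-cancellative weakly balanced semigroup is weakly cancellative. -/

import Mathlib

theorem quasiCancellative_weaklyBalanced_is_weaklyCancellative
    {S : Type*} [Semigroup S]
    (hqc : ∀ a b c : S,
      (∀ x y : WithOne S,
        (x * ↑b * y = x * ↑c * y ↔ y * x * ↑b = y * x * ↑c) ∧
        (x * ↑b * y = x * ↑c * y ↔ ↑b * y * x = ↑c * y * x)) →
      a * b = a * c → b = c)
    (hwb : ∀ a b x y : S, a * x = a * y → x * b = y * b → x * a = y * a ∧ b * x = b * y) :
    ∀ a b x y : S, a * x = a * y → x * b = y * b → x = y := by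
  intro a b x y hax hxb
  -- swap lemma: s*x = s*y ↔ x*s = y*s
  have hswap : ∀ s : S, s * x = s * y ↔ x * s = y * s := by
    intro s
    constructor
    · intro h; exact (hwb s b x y h hxb).1
    · intro h; exact (hwb a s x y hax h).2
  -- key forward: u*x*v = u*y*v → x*(v*u) = y*(v*u)
  have hfwd : ∀ u v : S, u * x * v = u * y * v → x * (v * u) = y * (v * u) := by
    intro u v h
    have h1 : u * (x * v) = u * (y * v) := by
      rw [← mul_assoc, h, mul_assoc]
    have hva : (v * a) * x = (v * a) * y := by
      rw [mul_assoc, hax, mul_assoc]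
    have h2 : (x * v) * a = (y * v) * a := by
      have := (hswap (v * a)).1 hva
      simp only [← mul_assoc] at this
      exact this
    have := (hwb u a (x * v) (y * v) h1 h2).1
    simp only [mul_assoc] at this ⊢
    exact this
  -- key backward: x*(v*u) = y*(v*u) → u*x*v = u*y*v
  have hbwd : ∀ u v : S, x * (v * u) = y * (v * u) → u * x * v = u * y * v := by
    intro u v h
    have h2 : (x * v) * u = (y * v) * u := by
      rw [mul_assoc, mul_assoc]; exact h
    have h1 : a * (x * v) = a * (y * v) := by
      rw [← mul_assoc, hax, mul_assoc]
    have := (hwb a u (x * v) (y * v) h1 h2).2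
    simp only [← mul_assoc] at this
    exact this
  refine hqc a x y ?_ hax
  intro u v
  induction u using WithOne.recOneCoe with
  | one =>
    induction v using WithOne.recOneCoe with
    | one => simp
    | coe t =>
      simp only [one_mul, mul_one, ← WithOne.coe_mul, WithOne.coe_inj]
      exact ⟨(hswap t).symm, trivial⟩
  | coe s =>
    induction v using WithOne.recOneCoe with
    | one =>
      simp only [one_mul, mul_one, ← WithOne.coe_mul, WithOne.coe_inj]
      exact ⟨trivial, hswap s⟩
    | coe t =>
      simp only [one_mul, mul_one, ← WithOne.coe_mul, WithOne.coe_inj]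
      constructor
      · constructor
        · intro h
          have h2 := hfwd s t h
          have := (hswap (t * s)).2 (by simpa [mul_assoc] using h2)
          simpa [mul_assoc] using this
        · intro h
          have ht : (t * s) * x = (t * s) * y := by simpa [mul_assoc] using h
          exact hbwd s t ((hswap (t * s)).1 ht)
      · constructor
        · intro h
          simpa [mul_assoc] using hfwd s t h
        · intro h
          exact hbwd s t (by simpa [mul_assoc] using h)
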